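/- Let E be a finite graph with no sinks, let R be a unital commutative ring of characteristic 0, and let α₁, …, αₙ ∈ E* be paths in E. Then the following are equivalent: (1) the cylinder sets Z(α₁), …, Z(αₙ) are pairwise disjoint and their union is E^∞; (2) Σᵢ αᵢαᵢ* = 1 in L_R(E). -/

import Mathlib

open MulOpposite

noncomputable section

/-- A directed graph: vertices, edges, source and range maps. -/
structure LGraph where
  V : Type
  Ed : Type
  src : Ed → V
  rng : Ed → V

namespace Leavitt

/-- Generators of the Leavitt path algebra: vertices, edges and ghost edges. -/
inductive Gen (G : LGraph) : Type
  | vert : G.V → Gen G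
  | edge : G.Ed → Gen G
  | ghost : G.Ed → Gen G

/-- The star operation on generators: fixes vertices, swaps edges and ghost edges. -/
def starGen {G : LGraph} : Gen G → Gen G
  | .vert v => .vert v
  | .edge e => .ghost e
  | .ghost e => .edge e

@[simp] lemma starGen_vert {G : LGraph} (v : G.V) : starGen (.vert v : Gen G) = .vert v := rfl
@[simp] lemma starGen_edge {G : LGraph} (e : G.Ed) : starGen (.edge e : Gen G) = .ghost e := rfl
@[simp] lemma starGen_ghost {G : LGraph} (e : G.Ed) : starGen (.ghost e : Gen G) = .edge e := rfl

/-- Words in the generators. -/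
abbrev Wd (G : LGraph) : Type := FreeMonoid (Gen G)

/-- The star of a word: reverse it and star each letter. -/
def wordStar {G : LGraph} (w : Wd G) : Wd G :=
  FreeMonoid.ofList (((FreeMonoid.toList w).map starGen).reverse)

/-- A vertex is a sink if it emits no edge. -/
def IsSink (G : LGraph) (v : G.V) : Prop := ∀ e : G.Ed, G.src e ≠ v

/-- The free `R`-algebra on the generators, realized as a monoid algebra on words. -/
abbrev MA (R : Type) [CommRing R] (G : LGraph) : Type := MonoidAlgebra R (Wd G)

/-- The generator `g` as an element of the free algebra. -/
def gn (R : Type) [CommRing R] {G : LGraph} (g : Gen G) : MA R G :=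
  MonoidAlgebra.single (FreeMonoid.of g) (1 : R)

/-- The defining relations of the Leavitt path algebra `L_R(E)`. -/
inductive LRel (R : Type) [CommRing R] (G : LGraph) : MA R G → MA R G → Prop
  | vert_vert {v w : G.V} (h : v ≠ w) : LRel R G (gn R (.vert v) * gn R (.vert w)) 0
  | vert_idem (v : G.V) : LRel R G (gn R (.vert v) * gn R (.vert v)) (gn R (.vert v))
  | ghost_edge {e f : G.Ed} (h : e ≠ f) : LRel R G (gn R (.ghost e) * gn R (.edge f)) 0
  | ghost_edge_self (e : G.Ed) :
      LRel R G (gn R (.ghost e) * gn R (.edge e)) (gn R (.vert (G.rng e)))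
  | src_mul_edge (e : G.Ed) :
      LRel R G (gn R (.vert (G.src e)) * gn R (.edge e)) (gn R (.edge e))
  | edge_mul_rng (e : G.Ed) :
      LRel R G (gn R (.edge e) * gn R (.vert (G.rng e))) (gn R (.edge e))
  | ghost_mul_src (e : G.Ed) :
      LRel R G (gn R (.ghost e) * gn R (.vert (G.src e))) (gn R (.ghost e))
  | rng_mul_ghost (e : G.Ed) :
      LRel R G (gn R (.vert (G.rng e)) * gn R (.ghost e)) (gn R (.ghost e))
  | ck (v : G.V) (h : {e : G.Ed | G.src e = v}.Finite)
      (hne : {e : G.Ed | G.src e = v}.Nonempty) :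
      LRel R G (gn R (.vert v)) (∑ e ∈ h.toFinset, gn R (.edge e) * gn R (.ghost e))
  | unit (h : (Set.univ : Set G.V).Finite) :
      LRel R G 1 (∑ v ∈ h.toFinset, gn R (.vert v))

/-- The Leavitt path algebra of the graph `G` with coefficients in `R`. -/
abbrev LPA (R : Type) [CommRing R] (G : LGraph) : Type := RingQuot (LRel R G)

/-- The quotient map onto the Leavitt path algebra. -/
def mk (R : Type) [CommRing R] (G : LGraph) : MA R G →+* LPA R G :=
  RingQuot.mkRingHom (LRel R G)

variable (R : Type) [CommRing R] (G : LGraph)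

/-- Auxiliary monoid homomorphism sending a word to the image in the opposite algebra of
its starred word. -/
def ghostMap : Wd G →* (LPA R G)ᵐᵒᵖ :=
  FreeMonoid.lift fun x => op (mk R G (gn R (starGen x)))

/-- The underlying ring homomorphism of the (conjugate-linear, with respect to `σ`)
involution, from the free algebra to the opposite of the Leavitt path algebra. -/
def starPre (σ : R →+* R) : MA R G →+* (LPA R G)ᵐᵒᵖ :=
  MonoidAlgebra.liftNCRingHom ((algebraMap R (LPA R G)ᵐᵒᵖ).comp σ) (ghostMap R G)
    (fun x y => Algebra.commute_algebraMap_left (σ x) _)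

lemma starPre_single (σ : R →+* R) (w : Wd G) (c : R) :
    starPre R G σ (MonoidAlgebra.single w c)
      = algebraMap R (LPA R G)ᵐᵒᵖ (σ c) * ghostMap R G w := by
  classical
  exact MonoidAlgebra.liftNC_single _ _ _ _

lemma starPre_gn (σ : R →+* R) (a : Gen G) :
    starPre R G σ (gn R a) = op (mk R G (gn R (starGen a))) := by
  rw [gn, starPre_single, map_one, map_one, one_mul]
  rfl

lemma starPre_gn_mul (σ : R →+* R) (a b : Gen G) :
    starPre R G σ (gn R a * gn R b)
      = op (mk R G (gn R (starGen b) * gn R (starGen a))) := by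
  rw [map_mul, starPre_gn, starPre_gn, ← op_mul, ← map_mul]

lemma starPre_rel (σ : R →+* R) :
    ∀ ⦃a b : MA R G⦄, LRel R G a b → starPre R G σ a = starPre R G σ b := by
  have key : ∀ {x y : MA R G}, LRel R G x y → mk R G x = mk R G y :=
    fun h => RingQuot.mkRingHom_rel h
  intro a b h
  cases h with
  | vert_vert h =>
      rw [starPre_gn_mul, map_zero, starGen_vert, starGen_vert,
        key (LRel.vert_vert (Ne.symm h)), map_zero, op_zero]
  | vert_idem v =>
      rw [starPre_gn_mul, starPre_gn, starGen_vert, key (LRel.vert_idem v)]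
  | ghost_edge h =>
      rw [starPre_gn_mul, map_zero, starGen_edge, starGen_ghost,
        key (LRel.ghost_edge (Ne.symm h)), map_zero, op_zero]
  | ghost_edge_self e =>
      rw [starPre_gn_mul, starPre_gn, starGen_edge, starGen_ghost, starGen_vert,
        key (LRel.ghost_edge_self e)]
  | src_mul_edge e =>
      rw [starPre_gn_mul, starPre_gn, starGen_edge, starGen_vert,
        key (LRel.ghost_mul_src e)]
  | edge_mul_rng e =>
      rw [starPre_gn_mul, starPre_gn, starGen_edge, starGen_vert,
        key (LRel.rng_mul_ghost e)]
  | ghost_mul_src e =>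
      rw [starPre_gn_mul, starPre_gn, starGen_ghost, starGen_vert,
        key (LRel.src_mul_edge e)]
  | rng_mul_ghost e =>
      rw [starPre_gn_mul, starPre_gn, starGen_ghost, starGen_vert,
        key (LRel.edge_mul_rng e)]
  | ck v hfin hne =>
      rw [starPre_gn, starGen_vert, map_sum]
      simp only [starPre_gn_mul, starGen_edge, starGen_ghost]
      rw [← Finset.op_sum, ← map_sum, key (LRel.ck v hfin hne)]
  | unit hfin =>
      rw [map_one, map_sum]
      simp only [starPre_gn, starGen_vert]
      rw [← Finset.op_sum, ← map_sum, ← key (LRel.unit hfin), map_one, op_one]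

/-- The involution `x ↦ x*` on the Leavitt path algebra, conjugate-linear with respect
to the coefficient conjugation `σ`. -/
def lstar (σ : R →+* R) : LPA R G → LPA R G :=
  fun x => unop ((RingQuot.lift ⟨starPre R G σ, starPre_rel R G σ⟩) x)

/-- `chainOK G v l` : the list of edges `l` is a path starting at the vertex `v`. -/
def chainOK (G : LGraph) : G.V → List G.Ed → Prop
  | _, [] => True
  | v, e :: l => G.src e = v ∧ chainOK G (G.rng e) l

/-- The end vertex of a list of edges starting at `v`. -/
def pathEnd (G : LGraph) : G.V → List G.Ed → G.V
  | v, [] => v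
  | _, e :: l => pathEnd G (G.rng e) l

/-- A finite path in `G`: a starting vertex together with a compatible (possibly empty)
list of edges.  Vertices are the paths of length `0`. -/
structure GPath (G : LGraph) where
  first : G.V
  edges : List G.Ed
  ok : chainOK G first edges

/-- The range (end vertex) of a path. -/
def GPath.last {G : LGraph} (p : GPath G) : G.V := pathEnd G p.first p.edges

/-- The length of a path. -/
def GPath.length {G : LGraph} (p : GPath G) : ℕ := p.edges.length

/-- The word in the generators associated to a path. -/
def GPath.word {G : LGraph} (p : GPath G) : Wd G :=
  FreeMonoid.ofList (Gen.vert p.first :: p.edges.map Gen.edge)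

/-- The element `α` of `L_R(E)` associated to a path `α`. -/
def pathElem {G : LGraph} (p : GPath G) : LPA R G :=
  mk R G (MonoidAlgebra.single p.word (1 : R))

/-- The element `α*` of `L_R(E)` associated to a path `α`. -/
def pathElemStar {G : LGraph} (p : GPath G) : LPA R G :=
  mk R G (MonoidAlgebra.single (wordStar p.word) (1 : R))

/-- The diagonal subalgebra: the `R`-linear span of the `αα*` for finite paths `α`. -/
def diagonal : Submodule R (LPA R G) :=
  Submodule.span R (Set.range fun p : GPath G => pathElem R p * pathElemStar R p)

/-- The image of a vertex in the Leavitt path algebra. -/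
def vertexElem (v : G.V) : LPA R G := mk R G (gn R (.vert v))

/-- The image of an edge in the Leavitt path algebra. -/
def edgeElem (e : G.Ed) : LPA R G := mk R G (gn R (.edge e))

/-- The image of a ghost edge (`e*`) in the Leavitt path algebra. -/
def ghostElem (e : G.Ed) : LPA R G := mk R G (gn R (.ghost e))

/-- A projection: a self-adjoint idempotent. -/
def IsProjection (σ : R →+* R) (p : LPA R G) : Prop :=
  p * p = p ∧ lstar R G σ p = p

/-- A unitary element. -/
def IsUnitary (σ : R →+* R) (u : LPA R G) : Prop :=
  lstar R G σ u * u = 1 ∧ u * lstar R G σ u = 1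

/-- The adjacency matrix of a graph. -/
noncomputable def adjMatrix (G : LGraph) : Matrix G.V G.V ℤ :=
  Matrix.of fun v w => (Nat.card {e : G.Ed // G.src e = v ∧ G.rng e = w} : ℤ)

/-- A graph is strongly connected if there is a path between any two vertices. -/
def StronglyConnected (G : LGraph) : Prop :=
  ∀ u w : G.V, ∃ p : GPath G, p.first = u ∧ p.last = w

/-- A graph is essential if it has no sinks and no sources. -/
def Essential (G : LGraph) : Prop :=
  (∀ v : G.V, ∃ e : G.Ed, G.src e = v) ∧ (∀ v : G.V, ∃ e : G.Ed, G.rng e = v)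

/-- Condition (L): every cycle has an exit. -/
def ConditionL (G : LGraph) : Prop :=
  ∀ p : GPath G, p.edges ≠ [] → p.last = p.first →
    ∃ (i : Fin p.edges.length) (f : G.Ed),
      G.src f = G.src (p.edges.get i) ∧ f ≠ p.edges.get i

/-- Complex conjugation on a subring of `ℂ` closed under conjugation. -/
def conjHom (R : Subring ℂ) (hR : ∀ z ∈ R, (starRingEnd ℂ) z ∈ R) : ↥R →+* ↥R where
  toFun z := ⟨(starRingEnd ℂ) (z : ℂ), hR (z : ℂ) z.2⟩
  map_one' := by ext; simp
  map_mul' x y := by ext; simp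
  map_zero' := by ext; simp
  map_add' x y := by ext; simp

/-- A subring of `ℂ` has an essentially unique partition of the unit if whenever
`∑ λᵢ λ̄ᵢ = 1` with all `λᵢ` in the subring, all but one of the `λᵢ` vanish. -/
def HasEUP (R : Subring ℂ) : Prop :=
  ∀ (n : ℕ) (lam : Fin n → ↥R),
    (∑ i, (lam i : ℂ) * (starRingEnd ℂ) (lam i : ℂ)) = 1 →
      ∃ j : Fin n, ∀ i : Fin n, i ≠ j → lam i = 0

/-- The graph `E₂`: one vertex and two loops (`false` ↦ `a`, `true` ↦ `b`). -/
def E2 : LGraph := ⟨PUnit, Bool, fun _ => PUnit.unit, fun _ => PUnit.unit⟩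

/-- The graph `E₂₋`, the Cuntz splice of `E₂`.  Vertices: `0 = u`, `1 = v₁`, `2 = v₂`.
Edges: `0,1 = f₁,f₂` (loops at `u`), `2 = d₁ : u → v₁`, `3 = d₂ : v₁ → u`,
`4 = e₁` (loop at `v₁`), `5 = e₂ : v₁ → v₂`, `6 = e₃ : v₂ → v₁`, `7 = e₄` (loop at `v₂`). -/
def E2m : LGraph := ⟨Fin 3, Fin 8, ![0, 0, 0, 1, 1, 1, 2, 2], ![0, 0, 1, 0, 1, 2, 1, 2]⟩

end Leavitt

end

namespace Leavitt

/-- An infinite path in a graph. -/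
structure InfPath (G : LGraph) where
  seq : ℕ → G.Ed
  chain : ∀ n : ℕ, G.rng (seq n) = G.src (seq (n + 1))

/-- The cylinder set of a finite path: all infinite paths extending it. -/
def cylinder {G : LGraph} (p : GPath G) : Set (InfPath G) :=
  { x | G.src (x.seq 0) = p.first ∧ ∀ i : Fin p.edges.length, x.seq i = p.edges.get i }

end Leavitt

namespace Leavitt

open scoped Classical

variable {E : LGraph}

lemma InfPath.ext' {ξ η : InfPath E} (h : ∀ n, ξ.seq n = η.seq n) : ξ = η := by
  cases ξ; cases η
  simp only [InfPath.mk.injEq]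
  exact funext h

/-- Remove the first edge of an infinite path. -/
def InfPath.tail (ξ : InfPath E) : InfPath E :=
  ⟨fun n => ξ.seq (n + 1), fun n => ξ.chain (n + 1)⟩

/-- Prepend an edge to an infinite path. -/
def InfPath.cons (e : E.Ed) (ξ : InfPath E) (h : E.rng e = E.src (ξ.seq 0)) : InfPath E :=
  ⟨fun n => Nat.rec e (fun m _ => ξ.seq m) n, by
    intro n
    cases n with
    | zero => exact h
    | succ m => exact ξ.chain m⟩

@[simp] lemma InfPath.cons_seq_zero (e : E.Ed) (ξ : InfPath E) (h) :
    (ξ.cons e h).seq 0 = e := rfl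

@[simp] lemma InfPath.cons_seq_succ (e : E.Ed) (ξ : InfPath E) (h) (n : ℕ) :
    (ξ.cons e h).seq (n + 1) = ξ.seq n := rfl

@[simp] lemma InfPath.tail_seq (ξ : InfPath E) (n : ℕ) : ξ.tail.seq n = ξ.seq (n + 1) := rfl

@[simp] lemma InfPath.cons_tail (ξ : InfPath E) (e : E.Ed) (he : ξ.seq 0 = e) (h) :
    (ξ.tail.cons e h) = ξ := by
  apply InfPath.ext'
  intro n
  cases n with
  | zero => simp [he]
  | succ m => rfl

variable (R : Type) [CommRing R]

/-- The free module on the set of infinite paths. -/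
abbrev PMod (E : LGraph) : Type := InfPath E →₀ R

/-- A linear endomorphism of `PMod` defined by images of basis vectors. -/
noncomputable def bmap (f : InfPath E → PMod R E) : PMod R E →ₗ[R] PMod R E :=
  Finsupp.lsum R fun ξ => LinearMap.id.smulRight (f ξ)

@[simp] lemma bmap_single (f : InfPath E → PMod R E) (ξ : InfPath E) (c : R) :
    bmap R f (Finsupp.single ξ c) = c • f ξ := by
  simp [bmap]

/-- The action of a generator on the free module on infinite paths. -/
noncomputable def gAct : Gen E → Module.End R (PMod R E)
  | .vert v => bmap R fun ξ => if E.src (ξ.seq 0) = v then Finsupp.single ξ 1 else 0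
  | .edge e => bmap R fun ξ =>
      if h : E.rng e = E.src (ξ.seq 0) then Finsupp.single (ξ.cons e h) 1 else 0
  | .ghost e => bmap R fun ξ =>
      if ξ.seq 0 = e then Finsupp.single ξ.tail 1 else 0

lemma gAct_vert (v : E.V) (ξ : InfPath E) (c : R) :
    gAct R (.vert v) (Finsupp.single ξ c)
      = if E.src (ξ.seq 0) = v then Finsupp.single ξ c else 0 := by
  simp only [gAct, bmap_single]
  split <;> simp

lemma gAct_edge (e : E.Ed) (ξ : InfPath E) (c : R) :
    gAct R (.edge e) (Finsupp.single ξ c)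
      = if h : E.rng e = E.src (ξ.seq 0) then Finsupp.single (ξ.cons e h) c else 0 := by
  simp only [gAct, bmap_single]
  split <;> simp

lemma gAct_ghost (e : E.Ed) (ξ : InfPath E) (c : R) :
    gAct R (.ghost e) (Finsupp.single ξ c)
      = if ξ.seq 0 = e then Finsupp.single ξ.tail c else 0 := by
  simp only [gAct, bmap_single]
  split <;> simp

end Leavitt

namespace Leavitt

open scoped Classical

variable {E : LGraph} (R : Type) [CommRing R]

/-- The representation on words. -/
noncomputable def wAct : Wd E →* Module.End R (PMod R E) := FreeMonoid.lift (gAct R)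

/-- The representation of the free algebra. -/
noncomputable def maRep : MA R E →ₐ[R] Module.End R (PMod R E) :=
  MonoidAlgebra.lift R _ (Wd E) (wAct R)

lemma maRep_single (w : Wd E) : maRep R (MonoidAlgebra.single w (1 : R)) = wAct R w := by
  simp [maRep]

lemma maRep_gn (g : Gen E) : maRep R (gn R g) = gAct R g := by
  rw [gn, maRep_single]
  simp [wAct]

lemma maRep_rel : ∀ ⦃a b : MA R E⦄, LRel R E a b → maRep R a = maRep R b := by
  intro a b h
  cases h with
  | @vert_vert v w h =>
      rw [map_mul, maRep_gn, maRep_gn, map_zero]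
      apply Finsupp.lhom_ext; intro ξ c
      rw [Module.End.mul_apply, LinearMap.zero_apply, gAct_vert]
      split_ifs with h1
      · rw [gAct_vert, h1, if_neg (Ne.symm h)]
      · rw [map_zero]
  | vert_idem v =>
      simp only [map_mul, maRep_gn]
      apply Finsupp.lhom_ext; intro ξ c
      rw [Module.End.mul_apply, gAct_vert]
      split_ifs with h1
      · rw [gAct_vert, if_pos h1]
      · rw [map_zero]
  | @ghost_edge e f h =>
      rw [map_mul, maRep_gn, maRep_gn, map_zero]
      apply Finsupp.lhom_ext; intro ξ c
      rw [Module.End.mul_apply, LinearMap.zero_apply, gAct_edge]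
      split_ifs with h1
      · rw [gAct_ghost, InfPath.cons_seq_zero, if_neg (fun hh => h hh.symm)]
      · rw [map_zero]
  | ghost_edge_self e =>
      simp only [map_mul, maRep_gn]
      apply Finsupp.lhom_ext; intro ξ c
      rw [Module.End.mul_apply, gAct_edge, gAct_vert]
      split_ifs with h1 h2 h3
      · rw [gAct_ghost, InfPath.cons_seq_zero, if_pos rfl]
        have ht : (ξ.cons e h1).tail = ξ := InfPath.ext' (fun n => rfl)
        rw [ht]
      · exact absurd h1.symm h2
      · exact absurd h3.symm h1
      · rw [map_zero]
  | src_mul_edge e =>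
      simp only [map_mul, maRep_gn]
      apply Finsupp.lhom_ext; intro ξ c
      rw [Module.End.mul_apply, gAct_edge]
      split_ifs with h1
      · rw [gAct_vert, InfPath.cons_seq_zero, if_pos rfl]
      · rw [map_zero]
  | edge_mul_rng e =>
      simp only [map_mul, maRep_gn]
      apply Finsupp.lhom_ext; intro ξ c
      rw [Module.End.mul_apply, gAct_vert, gAct_edge]
      split_ifs with h1 h2 h3
      · rw [gAct_edge, dif_pos h2]
      · exact absurd h1.symm h2
      · exact absurd h3.symm h1
      · rw [map_zero]
  | ghost_mul_src e =>
      simp only [map_mul, maRep_gn]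
      apply Finsupp.lhom_ext; intro ξ c
      rw [Module.End.mul_apply, gAct_vert, gAct_ghost]
      split_ifs with h1 h2 h3
      · rw [gAct_ghost, if_pos h2]
      · rw [gAct_ghost, if_neg h2]
      · exact absurd (by rw [h3]) h1
      · rw [map_zero]
  | rng_mul_ghost e =>
      simp only [map_mul, maRep_gn]
      apply Finsupp.lhom_ext; intro ξ c
      rw [Module.End.mul_apply, gAct_ghost]
      split_ifs with h1
      · rw [gAct_vert, InfPath.tail_seq, if_pos (by rw [← ξ.chain 0, h1])]
      · rw [map_zero]
  | ck v hfin hne =>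
      rw [maRep_gn, map_sum]
      simp only [map_mul, maRep_gn]
      apply Finsupp.lhom_ext; intro ξ c
      rw [gAct_vert, LinearMap.sum_apply]
      have hterm : ∀ e : E.Ed,
          (gAct R (Gen.edge e) * gAct R (Gen.ghost e)) (Finsupp.single ξ c)
            = if ξ.seq 0 = e then Finsupp.single ξ c else 0 := by
        intro e
        rw [Module.End.mul_apply, gAct_ghost]
        split_ifs with h1
        · rw [gAct_edge,
            dif_pos (show E.rng e = E.src (ξ.tail.seq 0) by
              rw [InfPath.tail_seq, ← h1]; exact ξ.chain 0),
            InfPath.cons_tail ξ e h1]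
        · rw [map_zero]
      simp only [hterm]
      rw [Finset.sum_ite_eq hfin.toFinset (ξ.seq 0) (fun _ => Finsupp.single ξ c)]
      simp [Set.Finite.mem_toFinset]
  | unit hfin =>
      rw [map_one, map_sum]
      simp only [maRep_gn]
      apply Finsupp.lhom_ext; intro ξ c
      rw [LinearMap.sum_apply]
      simp only [gAct_vert]
      rw [Finset.sum_ite_eq hfin.toFinset (E.src (ξ.seq 0)) (fun _ => Finsupp.single ξ c)]
      simp [Set.Finite.mem_toFinset]

/-- The representation of the Leavitt path algebra on the module of infinite paths. -/
noncomputable def lpaRep : LPA R E →+* Module.End R (PMod R E) :=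
  RingQuot.lift ⟨(maRep R).toRingHom, maRep_rel R⟩

lemma lpaRep_mk (x : MA R E) : lpaRep R (mk R E x) = maRep R x :=
  RingQuot.lift_mkRingHom_apply _ _ _

end Leavitt

namespace Leavitt

open scoped Classical

variable {E : LGraph} (R : Type) [CommRing R]

/-- Product of edge actions. -/
noncomputable def eEnd (l : List E.Ed) : Module.End R (PMod R E) :=
  (l.map (fun e => gAct R (Gen.edge e))).prod

/-- Product of ghost actions, reversed. -/
noncomputable def gEndRev (l : List E.Ed) : Module.End R (PMod R E) :=
  ((l.map (fun e => gAct R (Gen.ghost e))).reverse).prod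

lemma mem_cylinder_iff (p : GPath E) (ξ : InfPath E) :
    ξ ∈ cylinder p ↔ (E.src (ξ.seq 0) = p.first
      ∧ ∀ (i : ℕ) (h : i < p.edges.length), ξ.seq i = p.edges[i]) := by
  unfold cylinder
  simp only [Set.mem_setOf_eq]
  constructor
  · rintro ⟨ha, hb⟩
    exact ⟨ha, fun i h => by simpa using hb ⟨i, h⟩⟩
  · rintro ⟨ha, hb⟩
    exact ⟨ha, fun i => by simpa using hb i.1 i.2⟩

lemma key_list : ∀ (l : List E.Ed) (ξ : InfPath E) (c : R),
    (eEnd R l * gEndRev R l) (Finsupp.single ξ c)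
      = if ∀ (i : ℕ) (h : i < l.length), ξ.seq i = l[i] then Finsupp.single ξ c else 0 := by
  intro l
  induction l with
  | nil =>
      intro ξ c
      rw [if_pos (by intro i h; exact absurd h (Nat.not_lt_zero i))]
      simp [eEnd, gEndRev]
  | cons e l ih =>
      intro ξ c
      have he : eEnd R (e :: l) = gAct R (Gen.edge e) * eEnd R l := by
        simp [eEnd]
      have hg : gEndRev R (e :: l) = gEndRev R l * gAct R (Gen.ghost e) := by
        simp [gEndRev]
      rw [he, hg]
      have assoc : gAct R (Gen.edge e) * eEnd R l * (gEndRev R l * gAct R (Gen.ghost e))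
          = gAct R (Gen.edge e) * ((eEnd R l * gEndRev R l) * gAct R (Gen.ghost e)) := by
        simp only [mul_assoc]
      rw [assoc, Module.End.mul_apply, Module.End.mul_apply, gAct_ghost]
      by_cases h1 : ξ.seq 0 = e
      · rw [if_pos h1, ih ξ.tail c]
        by_cases hc : ∀ (i : ℕ) (h : i < l.length), ξ.tail.seq i = l[i]
        · rw [if_pos hc, gAct_edge,
            dif_pos (show E.rng e = E.src (ξ.tail.seq 0) by
              rw [InfPath.tail_seq, ← h1]; exact ξ.chain 0),
            InfPath.cons_tail ξ e h1,
            if_pos (by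
              intro i h
              cases i with
              | zero => simpa using h1
              | succ m =>
                  rw [List.getElem_cons_succ]
                  exact hc m (Nat.lt_of_succ_lt_succ h))]
        · rw [if_neg hc, map_zero,
            if_neg (by
              intro hall
              refine hc (fun i h => ?_)
              have := hall (i + 1) (Nat.succ_lt_succ h)
              simpa using this)]
      · rw [if_neg h1, map_zero, map_zero,
          if_neg (by
            intro hall
            exact h1 (by simpa using hall 0 (Nat.succ_pos _)))]

lemma lpaRep_pathPair (p : GPath E) (ξ : InfPath E) :
    lpaRep R (pathElem R p * pathElemStar R p) (Finsupp.single ξ (1 : R))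
      = if ξ ∈ cylinder p then Finsupp.single ξ (1 : R) else 0 := by
  have h1 : lpaRep R (pathElem R p)
      = gAct R (Gen.vert p.first) * eEnd R p.edges := by
    rw [pathElem, lpaRep_mk, maRep_single, wAct, FreeMonoid.lift_apply]
    show ((Gen.vert p.first :: p.edges.map Gen.edge).map (gAct R)).prod = _
    rw [List.map_cons, List.prod_cons, List.map_map]
    rfl
  have h2 : lpaRep R (pathElemStar R p)
      = gEndRev R p.edges * gAct R (Gen.vert p.first) := by
    rw [pathElemStar, lpaRep_mk, maRep_single, wAct, FreeMonoid.lift_apply]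
    have hw : ((FreeMonoid.toList (wordStar p.word)).map (gAct R))
        = ((p.edges.map (fun e => gAct R (Gen.ghost e))).reverse)
            ++ [gAct R (Gen.vert p.first)] := by
      show (((Gen.vert p.first :: p.edges.map Gen.edge).map starGen).reverse.map (gAct R)) = _
      rw [List.map_cons, List.map_map, List.reverse_cons, List.map_append,
        List.map_reverse, List.map_map]
      rfl
    rw [hw, List.prod_append, List.prod_cons, List.prod_nil, mul_one]
    rfl
  rw [map_mul, h1, h2]
  have assoc : gAct R (Gen.vert p.first) * eEnd R p.edges
      * (gEndRev R p.edges * gAct R (Gen.vert p.first))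
      = gAct R (Gen.vert p.first) * ((eEnd R p.edges * gEndRev R p.edges)
          * gAct R (Gen.vert p.first)) := by simp only [mul_assoc]
  rw [assoc, Module.End.mul_apply, Module.End.mul_apply, gAct_vert]
  by_cases hv : E.src (ξ.seq 0) = p.first
  · rw [if_pos hv, key_list]
    by_cases hc : ∀ (i : ℕ) (h : i < p.edges.length), ξ.seq i = p.edges[i]
    · rw [if_pos hc, gAct_vert, if_pos hv,
        if_pos ((mem_cylinder_iff p ξ).mpr ⟨hv, hc⟩)]
    · rw [if_neg hc, map_zero,
        if_neg (fun hm => hc ((mem_cylinder_iff p ξ).mp hm).2)]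
  · rw [if_neg hv, map_zero, map_zero,
      if_neg (fun hm => hv ((mem_cylinder_iff p ξ).mp hm).1)]

end Leavitt

namespace Leavitt

open scoped Classical

variable {E : LGraph} (R : Type) [CommRing R]

lemma existsUnique_of_sum_eq_one [CharZero R] {n : ℕ} (α : Fin n → GPath E)
    (hsum : (∑ i, pathElem R (α i) * pathElemStar R (α i)) = 1) (ξ : InfPath E) :
    ∃! i : Fin n, ξ ∈ cylinder (α i) := by
  have h := congrArg (lpaRep R) hsum
  rw [map_sum, map_one] at h
  have h2 := congrArg (fun T : Module.End R (PMod R E) =>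
    (T (Finsupp.single ξ (1 : R))) ξ) h
  simp only [LinearMap.sum_apply, Finsupp.finset_sum_apply, lpaRep_pathPair,
    Module.End.one_apply, Finsupp.single_eq_same,
    apply_ite (fun f : PMod R E => f ξ), Finsupp.coe_zero, Pi.zero_apply] at h2
  rw [Finset.sum_boole] at h2
  have hcard : (Finset.univ.filter (fun i => ξ ∈ cylinder (α i))).card = 1 := by
    have : ((Finset.univ.filter (fun i => ξ ∈ cylinder (α i))).card : R) = ((1 : ℕ) : R) := by
      simpa using h2
    exact_mod_cast this
  obtain ⟨j, hj⟩ := Finset.card_eq_one.mp hcard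
  refine ⟨j, ?_, ?_⟩
  · have : j ∈ Finset.univ.filter (fun i => ξ ∈ cylinder (α i)) := by
      rw [hj]; exact Finset.mem_singleton_self j
    exact (Finset.mem_filter.mp this).2
  · intro i hi
    have : i ∈ Finset.univ.filter (fun i => ξ ∈ cylinder (α i)) :=
      Finset.mem_filter.mpr ⟨Finset.mem_univ i, hi⟩
    rw [hj] at this
    exact Finset.mem_singleton.mp this

end Leavitt

namespace Leavitt

open scoped Classical

variable {E : LGraph} (R : Type) [CommRing R]

lemma mk_rel {a b : MA R E} (h : LRel R E a b) : mk R E a = mk R E b :=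
  RingQuot.mkRingHom_rel h

lemma vert_idem' (v : E.V) : vertexElem R E v * vertexElem R E v = vertexElem R E v := by
  rw [vertexElem, ← map_mul, mk_rel R (LRel.vert_idem v)]

lemma src_mul_edge' (e : E.Ed) :
    vertexElem R E (E.src e) * edgeElem R E e = edgeElem R E e := by
  rw [vertexElem, edgeElem, ← map_mul, mk_rel R (LRel.src_mul_edge e)]

lemma edge_mul_rng' (e : E.Ed) :
    edgeElem R E e * vertexElem R E (E.rng e) = edgeElem R E e := by
  rw [vertexElem, edgeElem, ← map_mul, mk_rel R (LRel.edge_mul_rng e)]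

lemma ghost_mul_src' (e : E.Ed) :
    ghostElem R E e * vertexElem R E (E.src e) = ghostElem R E e := by
  rw [vertexElem, ghostElem, ← map_mul, mk_rel R (LRel.ghost_mul_src e)]

lemma rng_mul_ghost' (e : E.Ed) :
    vertexElem R E (E.rng e) * ghostElem R E e = ghostElem R E e := by
  rw [vertexElem, ghostElem, ← map_mul, mk_rel R (LRel.rng_mul_ghost e)]

lemma ck' [Fintype E.Ed] (v : E.V) (hne : ∃ e : E.Ed, E.src e = v) :
    vertexElem R E v
      = ∑ e ∈ Finset.univ.filter (fun e => E.src e = v),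
          edgeElem R E e * ghostElem R E e := by
  have hfin : ({e : E.Ed | E.src e = v}).Finite := Set.toFinite _
  have hset : hfin.toFinset = Finset.univ.filter (fun e => E.src e = v) := by
    ext e; simp [Set.Finite.mem_toFinset]
  have h := mk_rel R (LRel.ck v hfin (by obtain ⟨e, he⟩ := hne; exact ⟨e, he⟩))
  rw [vertexElem, h, map_sum, hset]
  exact Finset.sum_congr rfl (fun e _ => by rw [map_mul]; rfl)

lemma one_eq_sum_vert [Fintype E.V] : (1 : LPA R E) = ∑ v : E.V, vertexElem R E v := by
  have h := mk_rel R (LRel.unit (Set.finite_univ (α := E.V)))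
  rw [map_one] at h
  rw [h, map_sum]
  have hset : (Set.finite_univ (α := E.V)).toFinset = Finset.univ := by
    ext v; simp
  rw [hset]
  rfl

/-- Product of edges in the Leavitt path algebra. -/
noncomputable def eProd (l : List E.Ed) : LPA R E := (l.map (edgeElem R E)).prod

/-- Reversed product of ghost edges in the Leavitt path algebra. -/
noncomputable def gProdRev (l : List E.Ed) : LPA R E := (l.reverse.map (ghostElem R E)).prod

lemma mk_single_ofList (L : List (Gen E)) :
    mk R E (MonoidAlgebra.single (FreeMonoid.ofList L) (1 : R))
      = (L.map (fun g => mk R E (gn R g))).prod := by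
  induction L with
  | nil =>
      show mk R E (MonoidAlgebra.single 1 1) = 1
      rw [← MonoidAlgebra.one_def, map_one]
  | cons g L ih =>
      have h1 : FreeMonoid.ofList (g :: L) = FreeMonoid.of g * FreeMonoid.ofList L := rfl
      rw [h1, ← one_mul (1 : R), ← MonoidAlgebra.single_mul_single, map_mul,
        List.map_cons, List.prod_cons, ih]
      rfl

lemma pathElem_eq (p : GPath E) :
    pathElem R p = vertexElem R E p.first * eProd R p.edges := by
  rw [pathElem, GPath.word, mk_single_ofList, List.map_cons, List.prod_cons, List.map_map]
  rfl

lemma pathElemStar_eq (p : GPath E) :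
    pathElemStar R p = gProdRev R p.edges * vertexElem R E p.first := by
  rw [pathElemStar, GPath.word, wordStar]
  show mk R E (MonoidAlgebra.single
      (FreeMonoid.ofList (((Gen.vert p.first :: p.edges.map Gen.edge).map starGen).reverse))
      (1 : R)) = _
  rw [mk_single_ofList, List.map_cons, List.map_map, List.reverse_cons, List.map_append,
    List.map_reverse, List.map_map]
  simp only [List.map_cons, List.map_nil, List.prod_append, List.prod_cons, List.prod_nil,
    mul_one, starGen_vert]
  rw [← List.map_reverse]
  have hfn : ((fun g => mk R E (gn R g)) ∘ starGen ∘ Gen.edge) = ghostElem R E := by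
    funext e; rfl
  rw [hfn]
  rfl

end Leavitt

namespace Leavitt

open scoped Classical

variable {E : LGraph} (R : Type) [CommRing R]

lemma chainOK_append_singleton (v : E.V) (l : List E.Ed) (e : E.Ed) :
    chainOK E v (l ++ [e]) ↔ chainOK E v l ∧ E.src e = pathEnd E v l := by
  induction l generalizing v with
  | nil => simp [chainOK, pathEnd]
  | cons f l ih => simp [chainOK, pathEnd, ih, and_assoc]

lemma A_mul_vend : ∀ (l : List E.Ed) (v : E.V), chainOK E v l →
    (vertexElem R E v * eProd R l) * vertexElem R E (pathEnd E v l)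
      = vertexElem R E v * eProd R l := by
  intro l
  induction l with
  | nil =>
      intro v _
      show (vertexElem R E v * eProd R []) * vertexElem R E v = _
      simp only [eProd, List.map_nil, List.prod_nil, mul_one]
      exact vert_idem' R v
  | cons e l ih =>
      intro v hok
      obtain ⟨h1, h2⟩ := hok
      have hE : eProd R (e :: l) = edgeElem R E e * eProd R l := by simp [eProd]
      have hVe : vertexElem R E v * edgeElem R E e = edgeElem R E e := by
        rw [← h1]; exact src_mul_edge' R e
    -- pathEnd E v (e::l) = pathEnd E (E.rng e) l definitionally
      have hend : pathEnd E v (e :: l) = pathEnd E (E.rng e) l := rfl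
      have key := ih (E.rng e) h2
      rw [hE, hend]
      calc (vertexElem R E v * (edgeElem R E e * eProd R l))
            * vertexElem R E (pathEnd E (E.rng e) l)
          = (edgeElem R E e * eProd R l) * vertexElem R E (pathEnd E (E.rng e) l) := by
            rw [← mul_assoc, hVe]
        _ = (edgeElem R E e * (vertexElem R E (E.rng e) * eProd R l))
              * vertexElem R E (pathEnd E (E.rng e) l) := by
            rw [← mul_assoc, edge_mul_rng' R e]
        _ = edgeElem R E e * ((vertexElem R E (E.rng e) * eProd R l)
              * vertexElem R E (pathEnd E (E.rng e) l)) := by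
            rw [mul_assoc]
        _ = edgeElem R E e * (vertexElem R E (E.rng e) * eProd R l) := by rw [key]
        _ = (edgeElem R E e * vertexElem R E (E.rng e)) * eProd R l := by rw [mul_assoc]
        _ = edgeElem R E e * eProd R l := by rw [edge_mul_rng' R e]
        _ = vertexElem R E v * (edgeElem R E e * eProd R l) := by
            rw [← mul_assoc, hVe]

/-- `pe v m` is `αα*` for the path `α = (v, m)` when it is a path, and `0` otherwise. -/
noncomputable def pe (v : E.V) (m : List E.Ed) : LPA R E :=
  if h : chainOK E v m then
    pathElem R ⟨v, m, h⟩ * pathElemStar R ⟨v, m, h⟩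
  else 0

lemma pe_path (p : GPath E) : pathElem R p * pathElemStar R p = pe R p.first p.edges := by
  rw [pe, dif_pos p.ok]

lemma pe_eq_of_chainOK (v : E.V) (m : List E.Ed) (h : chainOK E v m) :
    pe R v m = (vertexElem R E v * eProd R m) * (gProdRev R m * vertexElem R E v) := by
  rw [pe, dif_pos h, pathElem_eq, pathElemStar_eq]

lemma step [Fintype E.Ed] (hns : ∀ v : E.V, ∃ e : E.Ed, E.src e = v)
    (v : E.V) (m : List E.Ed) :
    pe R v m = ∑ e : E.Ed, pe R v (m ++ [e]) := by
  by_cases h : chainOK E v m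
  · have hterm : ∀ e : E.Ed, pe R v (m ++ [e])
        = if E.src e = pathEnd E v m then
            (vertexElem R E v * eProd R m)
              * ((edgeElem R E e * ghostElem R E e) * (gProdRev R m * vertexElem R E v))
          else 0 := by
      intro e
      by_cases he : E.src e = pathEnd E v m
      · rw [pe_eq_of_chainOK R v (m ++ [e]) ((chainOK_append_singleton v m e).mpr ⟨h, he⟩),
          if_pos he]
        have h1 : eProd R (m ++ [e]) = eProd R m * edgeElem R E e := by
          simp [eProd]
        have h2 : gProdRev R (m ++ [e]) = ghostElem R E e * gProdRev R m := by
          simp [gProdRev]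
        rw [h1, h2]
        simp only [mul_assoc]
      · rw [pe, dif_neg (fun hok => he ((chainOK_append_singleton v m e).mp hok).2),
          if_neg he]
    rw [Finset.sum_congr rfl (fun e _ => hterm e), ← Finset.sum_filter,
      ← Finset.mul_sum, ← Finset.sum_mul, ← ck' R (pathEnd E v m) (hns _)]
    rw [pe_eq_of_chainOK R v m h]
    calc (vertexElem R E v * eProd R m) * (gProdRev R m * vertexElem R E v)
        = ((vertexElem R E v * eProd R m) * vertexElem R E (pathEnd E v m))
            * (gProdRev R m * vertexElem R E v) := by rw [A_mul_vend R m v h]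
      _ = (vertexElem R E v * eProd R m)
            * (vertexElem R E (pathEnd E v m) * (gProdRev R m * vertexElem R E v)) := by
          rw [mul_assoc]
  · rw [pe, dif_neg h]
    symm
    apply Finset.sum_eq_zero
    intro e _
    rw [pe, dif_neg (fun hok => h ((chainOK_append_singleton v m e).mp hok).1)]

lemma sum_snoc {β : Type} [AddCommMonoid β] [Fintype E.Ed] (k : ℕ) (h : List E.Ed → β) :
    ∑ f : Fin (k + 1) → E.Ed, h (List.ofFn f)
      = ∑ f : Fin k → E.Ed, ∑ e : E.Ed, h (List.ofFn f ++ [e]) := by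
  rw [← (Fin.snocEquiv (fun _ => E.Ed)).sum_comp (fun f => h (List.ofFn f))]
  rw [Fintype.sum_prod_type]
  rw [Finset.sum_comm]
  apply Finset.sum_congr rfl
  intro f _
  apply Finset.sum_congr rfl
  intro e _
  congr 1
  show List.ofFn (Fin.snoc f e) = List.ofFn f ++ [e]
  rw [List.ofFn_succ']
  simp [Fin.snoc_castSucc, List.concat_eq_append]

lemma sum_ofFn_eq_one [Fintype E.V] [Fintype E.Ed]
    (hns : ∀ v : E.V, ∃ e : E.Ed, E.src e = v) (N : ℕ) :
    ∑ v : E.V, ∑ f : Fin N → E.Ed, pe R v (List.ofFn f) = 1 := by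
  induction N with
  | zero =>
      have h0 : ∀ v : E.V, ∑ f : Fin 0 → E.Ed, pe R v (List.ofFn f) = pe R v [] := by
        intro v
        rw [Finset.sum_congr rfl (fun f _ => by rw [List.ofFn_zero])]
        simp
      rw [Finset.sum_congr rfl (fun v _ => h0 v)]
      have h1 : ∀ v : E.V, pe R v [] = vertexElem R E v := by
        intro v
        rw [pe_eq_of_chainOK R v [] trivial]
        show (vertexElem R E v * eProd R []) * (gProdRev R [] * vertexElem R E v) = _
        simp only [eProd, gProdRev, List.map_nil, List.reverse_nil, List.prod_nil,
          mul_one, one_mul]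
        exact vert_idem' R v
      rw [Finset.sum_congr rfl (fun v _ => h1 v)]
      exact (one_eq_sum_vert R).symm
  | succ N ih =>
      rw [Finset.sum_congr rfl (fun v _ => sum_snoc (E := E) N (pe R v))]
      rw [Finset.sum_congr rfl (fun v _ =>
        Finset.sum_congr rfl (fun f _ => (step R hns v (List.ofFn f)).symm))]
      exact ih

lemma pe_ext_k [Fintype E.Ed] (hns : ∀ v : E.V, ∃ e : E.Ed, E.src e = v)
    (v : E.V) (m : List E.Ed) (k : ℕ) :
    pe R v m = ∑ f : Fin k → E.Ed, pe R v (m ++ List.ofFn f) := by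
  induction k with
  | zero =>
      rw [Finset.sum_congr rfl (fun f _ => by rw [List.ofFn_zero, List.append_nil])]
      simp
  | succ k ih =>
      rw [sum_snoc (E := E) k (fun L => pe R v (m ++ L))]
      rw [Finset.sum_congr rfl (fun f _ =>
        Finset.sum_congr rfl (fun e _ => by rw [← List.append_assoc]))]
      rw [Finset.sum_congr rfl (fun f _ => (step R hns v (m ++ List.ofFn f)).symm)]
      exact ih

end Leavitt

namespace Leavitt

open scoped Classical

variable {E : LGraph} (R : Type) [CommRing R]

/-- The finset of lists of edges of length `N`. -/
noncomputable def LN (E : LGraph) [Fintype E.Ed] (N : ℕ) : Finset (List E.Ed) :=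
  Finset.image List.ofFn (Finset.univ : Finset (Fin N → E.Ed))

lemma mem_LN [Fintype E.Ed] {N : ℕ} {m : List E.Ed} : m ∈ LN E N ↔ m.length = N := by
  constructor
  · intro h
    obtain ⟨f, _, rfl⟩ := Finset.mem_image.mp h
    simp
  · intro hm
    subst hm
    exact Finset.mem_image.mpr ⟨m.get, Finset.mem_univ _, List.ofFn_get m⟩

lemma sum_LN [Fintype E.Ed] {β : Type} [AddCommMonoid β] (N : ℕ) (h : List E.Ed → β) :
    ∑ m ∈ LN E N, h m = ∑ f : Fin N → E.Ed, h (List.ofFn f) :=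
  Finset.sum_image (fun f _ g _ hfg => List.ofFn_injective hfg)

lemma prefix_of_forall_getElem {X : Type} {l₁ l₂ : List X} (hlen : l₁.length ≤ l₂.length)
    (h : ∀ i (hi : i < l₁.length), l₁[i] = l₂[i]'(lt_of_lt_of_le hi hlen)) :
    l₁ <+: l₂ := by
  have heq : l₁ = l₂.take l₁.length := by
    apply List.ext_getElem (by simp [hlen])
    intro i h1 h2
    rw [List.getElem_take]
    exact h i h1
  rw [heq]
  exact List.take_prefix _ _

/-- The stream of edges obtained by following arbitrary edges out of `v`. -/
noncomputable def stream (hns : ∀ v : E.V, ∃ e : E.Ed, E.src e = v) (v : E.V) : ℕ → E.Ed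
  | 0 => (hns v).choose
  | n + 1 => (hns (E.rng (stream hns v n))).choose

/-- An infinite path starting at `v`. -/
noncomputable def streamPath (hns : ∀ v : E.V, ∃ e : E.Ed, E.src e = v) (v : E.V) :
    InfPath E :=
  ⟨stream hns v, fun n => ((hns (E.rng (stream hns v n))).choose_spec).symm⟩

lemma streamPath_src (hns : ∀ v : E.V, ∃ e : E.Ed, E.src e = v) (v : E.V) :
    E.src ((streamPath hns v).seq 0) = v := (hns v).choose_spec

/-- Extend a finite path to an infinite path. -/
noncomputable def extendPath (hns : ∀ v : E.V, ∃ e : E.Ed, E.src e = v) :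
    (m : List E.Ed) → (v : E.V) → chainOK E v m → {ξ : InfPath E // E.src (ξ.seq 0) = v}
  | [], v, _ => ⟨streamPath hns v, streamPath_src hns v⟩
  | e :: m, v, h =>
      let prev := extendPath hns m (E.rng e) h.2
      ⟨InfPath.cons e prev.1 (by rw [prev.2]), h.1⟩

lemma extendPath_prefix (hns : ∀ v : E.V, ∃ e : E.Ed, E.src e = v) :
    ∀ (m : List E.Ed) (v : E.V) (h : chainOK E v m) (i : ℕ) (hi : i < m.length),
      (extendPath hns m v h).1.seq i = m[i] := by
  intro m
  induction m with
  | nil => intro v h i hi; exact absurd hi (Nat.not_lt_zero i)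
  | cons e m ih =>
      intro v h i hi
      cases i with
      | zero => rfl
      | succ j =>
          show (extendPath hns m (E.rng e) h.2).1.seq j = (e :: m)[j + 1]
          rw [List.getElem_cons_succ]
          exact ih (E.rng e) h.2 j (Nat.lt_of_succ_lt_succ hi)

lemma existsUnique_pred {n : ℕ} (α : Fin n → GPath E)
    (hns : ∀ v : E.V, ∃ e : E.Ed, E.src e = v)
    (hdisj : ∀ i j : Fin n, i ≠ j → Disjoint (cylinder (α i)) (cylinder (α j)))
    (hcover : (⋃ i, cylinder (α i)) = (Set.univ : Set (InfPath E)))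
    {N : ℕ} (hNi : ∀ i, (α i).edges.length ≤ N)
    (v : E.V) (m : List E.Ed) (hm : m.length = N) (h : chainOK E v m) :
    ∃! i : Fin n, (α i).first = v ∧ (α i).edges <+: m := by
  have hsrc := (extendPath hns m v h).2
  set ξ := (extendPath hns m v h).1 with hξ
  have hpre : ∀ (i : ℕ) (hi : i < m.length), ξ.seq i = m[i] :=
    extendPath_prefix hns m v h
  have hmem_of_pred : ∀ i : Fin n, ((α i).first = v ∧ (α i).edges <+: m) →
      ξ ∈ cylinder (α i) := by
    rintro i ⟨h1, h2⟩
    apply (mem_cylinder_iff (α i) ξ).mpr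
    refine ⟨by rw [hsrc, h1], ?_⟩
    intro j hj
    rw [hpre j (lt_of_lt_of_le hj h2.length_le)]
    exact (h2.getElem hj).symm
  have hmemU : ξ ∈ ⋃ i, cylinder (α i) := hcover ▸ Set.mem_univ ξ
  obtain ⟨i, hi⟩ := Set.mem_iUnion.mp hmemU
  obtain ⟨hf, hp⟩ := (mem_cylinder_iff (α i) ξ).mp hi
  have h1 : (α i).first = v := by rw [← hf, hsrc]
  have h2 : (α i).edges <+: m := by
    apply prefix_of_forall_getElem (le_trans (hNi i) (le_of_eq hm.symm))
    intro j hj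
    rw [← hp j hj]
    exact hpre j (lt_of_lt_of_le hj (le_trans (hNi i) (le_of_eq hm.symm)))
  refine ⟨i, ⟨h1, h2⟩, ?_⟩
  intro k hk
  by_contra hne
  exact Set.disjoint_left.mp (hdisj k i hne) (hmem_of_pred k hk) hi

lemma sum_paths_eq_one [Fintype E.V] [Fintype E.Ed]
    (hns : ∀ v : E.V, ∃ e : E.Ed, E.src e = v)
    {n : ℕ} (α : Fin n → GPath E)
    (hdisj : ∀ i j : Fin n, i ≠ j → Disjoint (cylinder (α i)) (cylinder (α j)))
    (hcover : (⋃ i, cylinder (α i)) = (Set.univ : Set (InfPath E))) :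
    (∑ i, pathElem R (α i) * pathElemStar R (α i)) = 1 := by
  set N := Finset.univ.sup (fun i : Fin n => (α i).edges.length) with hN
  have hNi : ∀ i, (α i).edges.length ≤ N := fun i => by
    rw [hN]
    exact Finset.le_sup (f := fun i : Fin n => (α i).edges.length) (Finset.mem_univ i)
  have hstep1 : ∀ i : Fin n, pathElem R (α i) * pathElemStar R (α i)
      = ∑ m' ∈ LN E (N - (α i).edges.length), pe R (α i).first ((α i).edges ++ m') := by
    intro i
    rw [pe_path R (α i),
      pe_ext_k R hns (α i).first (α i).edges (N - (α i).edges.length)]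
    exact (sum_LN (N - (α i).edges.length)
      (fun m' => pe R (α i).first ((α i).edges ++ m'))).symm
  have hstep2 : ∀ i : Fin n,
      (∑ m' ∈ LN E (N - (α i).edges.length), pe R (α i).first ((α i).edges ++ m'))
      = ∑ t ∈ (Finset.univ ×ˢ LN E N).filter
          (fun t : E.V × List E.Ed => (α i).first = t.1 ∧ (α i).edges <+: t.2),
          pe R t.1 t.2 := by
    intro i
    apply Finset.sum_nbij' (i := fun m' => ((α i).first, (α i).edges ++ m'))
      (j := fun t => t.2.drop (α i).edges.length)
    · intro m' hm'
      refine Finset.mem_filter.mpr ⟨Finset.mem_product.mpr ⟨Finset.mem_univ _, ?_⟩,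
        rfl, List.prefix_append _ _⟩
      rw [mem_LN] at hm' ⊢
      rw [List.length_append, hm', Nat.add_sub_cancel' (hNi i)]
    · intro t ht
      obtain ⟨htp, _, _⟩ := Finset.mem_filter.mp ht
      rw [mem_LN, List.length_drop, mem_LN.mp (Finset.mem_product.mp htp).2]
    · intro m' _
      exact List.drop_left
    · intro t ht
      obtain ⟨htp, hp1, hp2⟩ := Finset.mem_filter.mp ht
      have hap := List.prefix_iff_eq_append.mp hp2
      obtain ⟨t1, t2⟩ := t
      simp only at hp1 hap ⊢
      rw [hp1, hap]
    · intro m' _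
      rfl
  have hper_t : ∀ t ∈ (Finset.univ : Finset E.V) ×ˢ LN E N,
      (∑ i : Fin n, if (α i).first = t.1 ∧ (α i).edges <+: t.2 then pe R t.1 t.2 else 0)
        = pe R t.1 t.2 := by
    intro t ht
    rw [← Finset.sum_filter, Finset.sum_const]
    by_cases hok : chainOK E t.1 t.2
    · have hlen : t.2.length = N := mem_LN.mp (Finset.mem_product.mp ht).2
      obtain ⟨i0, hi0, huniq⟩ := existsUnique_pred α hns hdisj hcover hNi t.1 t.2 hlen hok
      have hfil : Finset.univ.filter
          (fun i => (α i).first = t.1 ∧ (α i).edges <+: t.2) = {i0} := by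
        ext k
        simp only [Finset.mem_filter, Finset.mem_univ, true_and, Finset.mem_singleton]
        exact ⟨fun hk => huniq k hk, fun hk => hk ▸ hi0⟩
      rw [hfil, Finset.card_singleton, one_smul]
    · rw [pe, dif_neg hok, smul_zero]
  calc (∑ i, pathElem R (α i) * pathElemStar R (α i))
      = ∑ i : Fin n, ∑ t ∈ (Finset.univ ×ˢ LN E N).filter
          (fun t : E.V × List E.Ed => (α i).first = t.1 ∧ (α i).edges <+: t.2),
          pe R t.1 t.2 :=
        Finset.sum_congr rfl (fun i _ => (hstep1 i).trans (hstep2 i))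
    _ = ∑ i : Fin n, ∑ t ∈ (Finset.univ : Finset E.V) ×ˢ LN E N,
          if (α i).first = t.1 ∧ (α i).edges <+: t.2 then pe R t.1 t.2 else 0 :=
        Finset.sum_congr rfl (fun i _ => Finset.sum_filter _ _)
    _ = ∑ t ∈ (Finset.univ : Finset E.V) ×ˢ LN E N,
          ∑ i : Fin n, if (α i).first = t.1 ∧ (α i).edges <+: t.2
            then pe R t.1 t.2 else 0 := Finset.sum_comm
    _ = ∑ t ∈ (Finset.univ : Finset E.V) ×ˢ LN E N, pe R t.1 t.2 :=
        Finset.sum_congr rfl hper_t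
    _ = ∑ v : E.V, ∑ m ∈ LN E N, pe R v m :=
        Finset.sum_product _ _ _
    _ = ∑ v : E.V, ∑ f : Fin N → E.Ed, pe R v (List.ofFn f) :=
        Finset.sum_congr rfl (fun v _ => sum_LN N (pe R v))
    _ = 1 := sum_ofFn_eq_one R hns N

end Leavitt

open Leavitt in
/-- For a finite graph with no sinks and `R` a unital commutative ring
of characteristic `0`, the cylinder sets of `α₁, …, αₙ` partition `E^∞` if and only if
`∑ αᵢαᵢ* = 1` in `L_R(E)`. -/
theorem cylinder_partition_iff_sum_path_projections_eq_one
    (E : LGraph) [Fintype E.V] [Fintype E.Ed]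
    (hnosink : ∀ v : E.V, ∃ e : E.Ed, E.src e = v)
    (R : Type) [CommRing R] [CharZero R]
    (n : ℕ) (α : Fin n → GPath E) :
    ((∀ i j : Fin n, i ≠ j → Disjoint (cylinder (α i)) (cylinder (α j))) ∧
        (⋃ i, cylinder (α i)) = (Set.univ : Set (InfPath E)))
      ↔ (∑ i, pathElem R (α i) * pathElemStar R (α i)) = 1 := by
  constructor
  · rintro ⟨hdisj, hcover⟩
    exact sum_paths_eq_one R hnosink α hdisj hcover
  · intro hsum
    constructor
    · intro i j hij
      rw [Set.disjoint_left]
      intro ξ hi hj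
      obtain ⟨k, _, huniq⟩ := existsUnique_of_sum_eq_one R α hsum ξ
      exact hij ((huniq i hi).trans (huniq j hj).symm)
    · apply Set.eq_univ_iff_forall.mpr
      intro ξ
      obtain ⟨i, hi, _⟩ := existsUnique_of_sum_eq_one R α hsum ξ
      exact Set.mem_iUnion.mpr ⟨i, hi⟩
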